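/- Let G be a group with R ⊆ G \ {1} a set of involutions such that G = ∗_{r∈R} ⟨r⟩. Let S ⊆ G \ {1} be a set of elements such that: (a) S generates G; (b) every s ∈ S satisfies s² = 1; (c) S is closed under conjugation by elements of G. Then R ⊆ S, R is a set of orbit representatives for the conjugation action of G on S, and S equals the set of all elements of order two in G. -/

import Mathlib

open Monoid

section aux
variable {ι : Type*} {M : ι → Type*} [∀ i, Group (M i)]

noncomputable def projHom [DecidableEq ι] (i : ι) : CoprodI M →* M i :=
  CoprodI.lift (fun j => if h : j = i then (by subst h; exact MonoidHom.id _) else 1)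

lemma projHom_of_self [DecidableEq ι] (i : ι) (m : M i) :
    projHom i (CoprodI.of m) = m := by
  rw [projHom, CoprodI.lift_of, dif_pos rfl]; rfl

lemma projHom_of_ne [DecidableEq ι] {i j : ι} (h : j ≠ i) (m : M j) :
    projHom i (CoprodI.of m) = 1 := by
  rw [projHom, CoprodI.lift_of, dif_neg h]; rfl

lemma projHom_conj [DecidableEq ι] (i : ι) (hcomm : ∀ a b : M i, a * b = b * a)
    (g x : CoprodI M) : projHom i (g * x * g⁻¹) = projHom i x := by
  rw [map_mul, map_mul, map_inv, hcomm (projHom i g) (projHom i x), mul_inv_cancel_right]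

end aux
open Monoid

section word
variable {ι : Type*} {M : ι → Type*} [∀ i, Group (M i)]
  [DecidableEq ι] [∀ i, DecidableEq (M i)]

open Monoid.CoprodI

/-- product of a letter list -/
def letterProd (l : List (Σ i, M i)) : CoprodI M :=
  (l.map fun p => CoprodI.of p.snd).prod

lemma letterProd_append (l1 l2 : List (Σ i, M i)) :
    letterProd (M := M) (l1 ++ l2) = letterProd l1 * letterProd l2 := by
  simp [letterProd]

lemma word_prod_eq (w : Word M) : w.prod = letterProd w.toList := rfl

lemma equiv_prod (x : CoprodI M) : (Word.equiv x).prod = x :=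
  Word.equiv.symm_apply_apply x

lemma equiv_of_prod (w : Word M) : Word.equiv w.prod = w :=
  Word.equiv.apply_symm_apply w

theorem conj_into_factor (x : CoprodI M) (hx : x ≠ 1) (hx2 : x ^ 2 = 1) :
    ∃ (i : ι) (m : M i), m ≠ 1 ∧ IsConj (CoprodI.of m) x := by
  suffices H : ∀ (n : ℕ) (x : CoprodI M), (Word.equiv x).toList.length ≤ n →
      x ≠ 1 → x ^ 2 = 1 → ∃ (i : ι) (m : M i), m ≠ 1 ∧ IsConj (CoprodI.of m) x from
    H _ x le_rfl hx hx2
  intro n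
  induction n with
  | zero =>
    intro x hlen hx _
    exfalso
    apply hx
    have h0 : (Word.equiv x).toList = [] := List.length_eq_zero_iff.mp (Nat.le_zero.mp hlen)
    have : Word.equiv x = Word.empty := Word.ext h0
    calc x = (Word.equiv x).prod := (equiv_prod x).symm
      _ = 1 := by rw [this]; rfl
  | succ n ih =>
    intro x hlen hx hx2
    have hw : (Word.equiv x).prod = x := equiv_prod x
    rcases hl : (Word.equiv x).toList with _ | ⟨⟨i, a⟩, tl⟩
    · exact absurd (by rw [← hw, word_prod_eq, hl]; rfl) hx
    · have hne1 := (Word.equiv x).ne_one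
      have hchain := (Word.equiv x).chain_ne
      rw [hl] at hne1 hchain
      rcases List.eq_nil_or_concat tl with rfl | ⟨mid, ⟨j, b⟩, rfl⟩
      · -- singleton
        refine ⟨i, a, hne1 ⟨i, a⟩ (by simp), ?_⟩
        have : x = CoprodI.of a := by
          rw [← hw, word_prod_eq, hl, letterProd]; simp
        rw [this]
      · rw [List.concat_eq_append] at hl hne1 hchain
        have hx_eq : x = CoprodI.of a * letterProd mid * CoprodI.of b := by
          rw [← hw, word_prod_eq, hl]
          simp [letterProd, mul_assoc]
        by_cases hij : i = j
        · subst hij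
          -- conjugate and shorten
          -- facts about mid
          have hchain' : List.IsChain (fun l l' : (Σ i, M i) => l.fst ≠ l'.fst)
              ((⟨i, a⟩ :: mid) ++ [⟨i, b⟩]) := hchain
          rw [List.isChain_append] at hchain'
          obtain ⟨hc1, -, hc3⟩ := hchain'
          have hmid_ne : mid ≠ [] := by
            rintro rfl
            exact hc3 ⟨i, a⟩ (by simp) ⟨i, b⟩ (by simp) rfl
          have hlast_mid : ∀ p ∈ mid.getLast?, (Sigma.fst p) ≠ i := by
            intro p hp
            have : ((⟨i, a⟩ : Σ i, M i) :: mid).getLast? = some p := by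
              rw [List.getLast?_cons, Option.mem_def.mp hp]; rfl
            exact hc3 p this ⟨i, b⟩ (by simp)
          have hchain_mid : List.Chain' (fun l l' : (Σ i, M i) => l.fst ≠ l'.fst) mid :=
            (List.isChain_cons.mp hc1).2
          have hne1_mid : ∀ p ∈ mid, (Sigma.snd p) ≠ 1 := fun p hp =>
            hne1 p (by simp [hp])
          -- the conjugate element
          set y := (CoprodI.of a)⁻¹ * x * (CoprodI.of a) with hy_def
          have hy_eq : y = letterProd mid * CoprodI.of (b * a) := by
            rw [hy_def, hx_eq, map_mul]
            group
          have hy_conj : IsConj y x := by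
            rw [isConj_iff]
            exact ⟨CoprodI.of a, by rw [hy_def]; group⟩
          have hy_ne : y ≠ 1 := by
            rw [hy_def]
            intro h
            apply hx
            have := congrArg (fun z => CoprodI.of a * z * (CoprodI.of a)⁻¹) h
            simpa [mul_assoc] using this
          have hy2 : y ^ 2 = 1 := by
            rw [hy_def]
            have : ((CoprodI.of a)⁻¹ * x * CoprodI.of a) ^ 2
                = (CoprodI.of a)⁻¹ * x ^ 2 * CoprodI.of a := by
              rw [pow_two, pow_two]; simp [mul_assoc]
            rw [this, hx2]; simp
          have hlen_mid : mid.length + 2 ≤ n + 1 := by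
            have := hlen
            rw [hl] at this
            simpa [List.length_append] using this
          -- build the shorter word for y
          by_cases hba : b * a = 1
          · have hy_eq' : y = letterProd mid := by rw [hy_eq, hba]; simp
            have hword : ∃ w' : Word M, w'.toList = mid := by
              exact ⟨⟨mid, hne1_mid, hchain_mid⟩, rfl⟩
            obtain ⟨w', hw'⟩ := hword
            have hyw : Word.equiv y = w' := by
              rw [hy_eq', show letterProd mid = w'.prod by rw [word_prod_eq, hw'],
                equiv_of_prod]
            have : (Word.equiv y).toList.length ≤ n := by
              rw [hyw, hw']; omega
            obtain ⟨k, m, hm, hconj⟩ := ih y this hy_ne hy2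
            exact ⟨k, m, hm, hconj.trans hy_conj⟩
          · have hword : ∃ w' : Word M, w'.toList = mid ++ [⟨i, b * a⟩] := by
              refine ⟨⟨mid ++ [⟨i, b * a⟩], ?_, ?_⟩, rfl⟩
              · intro p hp
                rcases List.mem_append.mp hp with h | h
                · exact hne1_mid p h
                · simp at h; subst h; exact hba
              · rw [List.isChain_append]
                refine ⟨hchain_mid, List.isChain_singleton _, ?_⟩
                intro p hp q hq
                simp at hq; subst hq
                exact hlast_mid p hp
            obtain ⟨w', hw'⟩ := hword
            have hyw : Word.equiv y = w' := by
              rw [hy_eq, show letterProd mid * CoprodI.of (b * a) = w'.prod by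
                rw [word_prod_eq, hw']; simp [letterProd], equiv_of_prod]
            have : (Word.equiv y).toList.length ≤ n := by
              rw [hyw, hw']; simp; omega
            obtain ⟨k, m, hm, hconj⟩ := ih y this hy_ne hy2
            exact ⟨k, m, hm, hconj.trans hy_conj⟩
        · -- first and last indices differ: x^2 ≠ 1, contradiction
          exfalso
          have hL : True := trivial
          have hw2 : ∃ w2 : Word M, w2.toList = (⟨i, a⟩ :: mid ++ [⟨j, b⟩]) ++ (⟨i, a⟩ :: mid ++ [⟨j, b⟩]) := by
            refine ⟨⟨(⟨i, a⟩ :: mid ++ [⟨j, b⟩]) ++ (⟨i, a⟩ :: mid ++ [⟨j, b⟩]), ?_, ?_⟩, rfl⟩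
            · intro p hp
              rcases List.mem_append.mp hp with h | h <;> exact hne1 p h
            · rw [List.isChain_append]
              refine ⟨hchain, hchain, ?_⟩
              intro p hp q hq
              rw [show ((⟨i, a⟩ : Σ i, M i) :: mid ++ [⟨j, b⟩])
                = ((⟨i, a⟩ : Σ i, M i) :: mid) ++ [⟨j, b⟩] from rfl,
                List.getLast?_concat] at hp
              simp only [List.head?_append, List.head?_cons] at hq
              simp at hp hq
              subst hp
              rw [← hq]
              exact Ne.symm hij
          obtain ⟨w2, hw2⟩ := hw2
          have hprod : w2.prod = x * x := by
            rw [word_prod_eq, hw2, letterProd_append, List.cons_append, ← hl,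
              ← word_prod_eq, hw]
          have : w2.prod = Word.empty.prod := by
            rw [hprod, Word.prod_empty, ← hx2, pow_two]
          have : w2 = Word.empty := Word.equiv.symm.injective this
          rw [this] at hw2
          simp at hw2
end word

lemma invol_zpowers {G : Type*} [Group G] {r x : G} (hr2 : r ^ 2 = 1)
    (hx : x ∈ Subgroup.zpowers r) (hx1 : x ≠ 1) : x = r := by
  obtain ⟨k, rfl⟩ := Subgroup.mem_zpowers_iff.mp hx
  have hrr : r * r = 1 := by rw [← pow_two]; exact hr2
  have hnat : ∀ n : ℕ, r ^ n = 1 ∨ r ^ n = r := by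
    intro n
    induction n with
    | zero => left; exact pow_zero r
    | succ n ih =>
      rcases ih with h | h
      · right; rw [pow_succ, h, one_mul]
      · left; rw [pow_succ, h, hrr]
  have hinv : r⁻¹ = r := inv_eq_of_mul_eq_one_right hrr
  obtain ⟨n, rfl | rfl⟩ := Int.eq_nat_or_neg k
  · rw [zpow_natCast] at hx1 ⊢
    rcases hnat n with h | h
    · exact absurd h hx1
    · exact h
  · rw [zpow_neg, zpow_natCast] at hx1 ⊢
    rcases hnat n with h | h
    · rw [h] at hx1; exact absurd inv_one hx1
    · rw [h, hinv]

/-- Let `G` be the internal free product of the order-two cyclic subgroups generated by a set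
`R ⊆ G \ {1}` of involutions, and let `S ⊆ G \ {1}` be a conjugation-closed generating set of
involutions.  Then `R ⊆ S`, `R` is a set of orbit representatives for the conjugation action
of `G` on `S`, and `S` is the set of all order-two elements of `G`. -/
theorem stmt_1 {G : Type*} [Group G] (R S : Set G)
    (hR : ∀ r ∈ R, r ≠ 1 ∧ r ^ 2 = 1)
    (hfree : Function.Bijective
      (Monoid.CoprodI.lift (fun r : R => (Subgroup.zpowers (r : G)).subtype)))
    (hS1 : ∀ s ∈ S, s ≠ 1)
    (hSgen : Subgroup.closure S = ⊤)
    (hSsq : ∀ s ∈ S, s ^ 2 = 1)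
    (hSconj : ∀ s ∈ S, ∀ g : G, g * s * g⁻¹ ∈ S) :
    R ⊆ S ∧ (∀ s ∈ S, ∃! r, r ∈ R ∧ IsConj r s) ∧ S = {g : G | g ≠ 1 ∧ g ^ 2 = 1} := by
  classical
  set φ : CoprodI (fun r : R => (Subgroup.zpowers (r : G))) ≃* G :=
    MulEquiv.ofBijective _ hfree with hφ
  have hφof : ∀ (r : R) (m : (Subgroup.zpowers (r : G))), φ (CoprodI.of m) = (m : G) := by
    intro r m
    show (Monoid.CoprodI.lift (fun r : R => (Subgroup.zpowers (r : G)).subtype))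
      (CoprodI.of m) = (m : G)
    rw [CoprodI.lift_of]
    rfl
  have hcomm : ∀ (r : R) (a b : (Subgroup.zpowers (r : G))), a * b = b * a := by
    rintro r ⟨a, m, rfl⟩ ⟨b, n, rfl⟩
    apply Subtype.ext
    show (r : G) ^ m * (r : G) ^ n = (r : G) ^ n * (r : G) ^ m
    rw [← zpow_add, ← zpow_add, add_comm]
  set χ : ∀ r : R, G →* (Subgroup.zpowers (r : G)) :=
    fun r => (projHom r).comp φ.symm.toMonoidHom with hχ
  have hχ_conj : ∀ (r : R) (g x : G), χ r (g * x * g⁻¹) = χ r x := by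
    intro r g x
    have h := projHom_conj r (hcomm r) (φ.symm g) (φ.symm x)
    simpa [hχ, map_mul, map_inv] using h
  have hχ_isconj : ∀ (r : R) (x y : G), IsConj x y → χ r x = χ r y := by
    intro r x y h
    obtain ⟨c, hc⟩ := isConj_iff.mp h
    rw [← hc, hχ_conj]
  have hsymm_of : ∀ r' : R,
      φ.symm (r' : G) = CoprodI.of (M := fun r : R => ↥(Subgroup.zpowers (r : G)))
        (i := r') ⟨(r' : G), Subgroup.mem_zpowers _⟩ := by
    intro r'
    apply φ.injective
    rw [MulEquiv.apply_symm_apply, hφof]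
  have hχ_self : ∀ r : R, χ r (r : G) = ⟨(r : G), Subgroup.mem_zpowers _⟩ := by
    intro r
    show projHom r (φ.symm (r : G)) = _
    rw [hsymm_of, projHom_of_self]
  have hχ_ne : ∀ r r' : R, (r' : G) ≠ (r : G) → χ r (r' : G) = 1 := by
    intro r r' hne
    show projHom r (φ.symm (r' : G)) = 1
    rw [hsymm_of, projHom_of_ne]
    exact fun h => hne (congrArg Subtype.val h)
  have hχ_self_ne : ∀ r : R, χ r (r : G) ≠ 1 := by
    intro r h
    rw [hχ_self] at h
    exact (hR r r.2).1 (congrArg Subtype.val h)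
  -- every involution of G is conjugate to an element of R
  have hconj_R : ∀ g : G, g ≠ 1 → g ^ 2 = 1 → ∃ r : R, IsConj (r : G) g := by
    intro g hg hg2
    have hx : φ.symm g ≠ 1 := by
      intro h
      apply hg
      have := congrArg φ h
      simpa using this
    have hx2 : (φ.symm g) ^ 2 = 1 := by rw [← map_pow, hg2, map_one]
    obtain ⟨i, m, hm, hconj⟩ := conj_into_factor _ hx hx2
    refine ⟨i, ?_⟩
    have h1 : IsConj (φ (CoprodI.of m)) (φ (φ.symm g)) := φ.toMonoidHom.map_isConj hconj
    rw [MulEquiv.apply_symm_apply, hφof] at h1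
    have hmG : (m : G) = (i : G) := by
      refine invol_zpowers (hR i i.2).2 m.2 ?_
      exact fun h => hm (Subtype.ext h)
    rwa [hmG] at h1
  -- every s in S is conjugate to some r in R which also lies in S
  have hSrep : ∀ s ∈ S, ∃ r : R, IsConj (r : G) s ∧ (r : G) ∈ S := by
    intro s hs
    obtain ⟨r, hconj⟩ := hconj_R s (hS1 s hs) (hSsq s hs)
    refine ⟨r, hconj, ?_⟩
    obtain ⟨c, hc⟩ := isConj_iff.mp hconj
    have h2 := hSconj s hs c⁻¹
    have : c⁻¹ * s * c⁻¹⁻¹ = (r : G) := by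
      rw [← hc]; group
    rwa [this] at h2
  -- R ⊆ S
  have hRS : R ⊆ S := by
    intro r₀ hr₀
    by_contra hr₀S
    have hker : ∀ s ∈ S, χ ⟨r₀, hr₀⟩ s = 1 := by
      intro s hs
      obtain ⟨r, hconj, hrS⟩ := hSrep s hs
      have hne : (r : G) ≠ r₀ := fun h => hr₀S (h ▸ hrS)
      rw [← hχ_isconj _ _ _ hconj]
      exact hχ_ne ⟨r₀, hr₀⟩ r hne
    have hle : Subgroup.closure S ≤ (χ ⟨r₀, hr₀⟩).ker :=
      (Subgroup.closure_le _).mpr (fun s hs => hker s hs)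
    rw [hSgen] at hle
    exact hχ_self_ne ⟨r₀, hr₀⟩ (hle (Subgroup.mem_top r₀))
  refine ⟨hRS, ?_, ?_⟩
  · -- unique representatives
    intro s hs
    obtain ⟨r, hconj, hrS⟩ := hSrep s hs
    refine ⟨(r : G), ⟨r.2, hconj⟩, ?_⟩
    rintro r' ⟨hr', hconj'⟩
    by_contra hne
    have h1 : IsConj (r : G) r' := hconj.trans hconj'.symm
    have h2 : χ r (r' : G) = 1 := hχ_ne r ⟨r', hr'⟩ hne
    have h3 : χ r ((r : G)) = χ r r' := hχ_isconj r _ _ h1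
    rw [h2] at h3
    exact hχ_self_ne r h3
  · -- S is the set of involutions
    ext g
    simp only [Set.mem_setOf_eq]
    constructor
    · exact fun hg => ⟨hS1 g hg, hSsq g hg⟩
    · rintro ⟨hg1, hg2⟩
      obtain ⟨r, hconj⟩ := hconj_R g hg1 hg2
      obtain ⟨c, hc⟩ := isConj_iff.mp hconj
      rw [← hc]
      exact hSconj (r : G) (hRS r.2) c
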